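/- Let ν ≥ 2 be a real number. Then the function h̃ : [0, ∞) → ℝ defined by h̃(x) = (x² + 3x + 2) · log((x + 1 + ν)/(x + ν)) satisfies h̃''(x) ≥ 0 for all x ≥ 0; in particular h̃ is convex on [0, ∞). -/

import Mathlib

set_option maxHeartbeats 1000000

open Real Set Filter Topology

noncomputable def htilde_d1 (ν : ℝ) : ℝ → ℝ := fun y =>
  (2*y+3) * (Real.log (y+1+ν) - Real.log (y+ν)) + (y^2+3*y+2) * ((y+1+ν)⁻¹ - (y+ν)⁻¹)

noncomputable def htilde_d2 (ν : ℝ) : ℝ → ℝ := fun y =>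
  2 * (Real.log (y+1+ν) - Real.log (y+ν)) + 2*(2*y+3) * ((y+1+ν)⁻¹ - (y+ν)⁻¹)
    + (y^2+3*y+2) * (1/(y+ν)^2 - 1/(y+1+ν)^2)

lemma htilde_key_ineq (ν x : ℝ) (hν : 2 ≤ ν) (hx : 0 ≤ x) :
    0 ≤ 2 * (Real.log (x+1+ν) - Real.log (x+ν)) + 2*(2*x+3) * ((x+1+ν)⁻¹ - (x+ν)⁻¹)
        + (x^2+3*x+2) * (1/(x+ν)^2 - 1/(x+1+ν)^2) := by
  set a := x + ν with ha
  set b := x + 1 + ν with hb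
  have ha2 : 2 ≤ a := by simp [ha]; linarith
  have hb3 : 3 ≤ b := by simp [hb]; linarith
  have ha0 : (0:ℝ) < a := by linarith
  have hb0 : (0:ℝ) < b := by linarith
  have hba : b = a + 1 := by simp [ha, hb]; ring
  have hu : |1/b| < 1 := by
    rw [abs_of_pos (by positivity)]
    rw [div_lt_one hb0]; linarith
  have htay := Real.abs_log_sub_add_sum_range_le hu 3
  have hsum : (∑ i ∈ Finset.range 3, (1/b) ^ (i + 1) / (i + 1)) = 1/b + 1/(2*b^2) + 1/(3*b^3) := by
    simp [Finset.sum_range_succ]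
    field_simp
    ring
  have h1mu : 1 - 1/b = a/b := by field_simp [hba]; linarith
  have hlog : Real.log (1 - 1/b) = Real.log a - Real.log b := by
    rw [h1mu, Real.log_div ha0.ne' hb0.ne']
  have herr : |1/b| ^ (3+1) / (1 - |1/b|) = 1/(a*b^3) := by
    rw [abs_of_pos (by positivity), h1mu]
    field_simp
    rw [one_div, inv_pow, mul_inv_cancel₀ (by positivity)]
  rw [hsum, hlog, herr, abs_le] at htay
  have hL : Real.log b - Real.log a ≥ 1/b + 1/(2*b^2) + 1/(3*b^3) - 1/(a*b^3) := by
    have := htay.1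
    linarith
  set t := ν - 2 with htdef
  have ht : 0 ≤ t := by linarith
  have hat : a = x + 2 + t := by simp [ha, htdef]
  have hbt : b = x + 3 + t := by simp [hb, htdef]; ring
  have hG : 0 ≤ 6*a^2*b^2 + 3*a^2*b + 2*a^2 - 6*a - 6*(2*x+3)*a*b^2 + 3*(x^2+3*x+2)*(2*a+1)*b := by
    have hGeq : 6*a^2*b^2 + 3*a^2*b + 2*a^2 - 6*a - 6*(2*x+3)*a*b^2 + 3*(x^2+3*x+2)*(2*a+1)*b
        = 3*(x+3+t)*((x+1)+(4*x+10)*t+(2*x+9)*t^2+2*t^3) + (2*(x+t)^2+5*(x+t)+5) := by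
      rw [hat, hbt]; ring
    rw [hGeq]
    nlinarith [mul_nonneg hx ht, sq_nonneg (x+t), mul_nonneg (mul_nonneg ht ht) ht,
      mul_nonneg hx (mul_nonneg ht ht), mul_nonneg ht ht, mul_nonneg hx (mul_nonneg (mul_nonneg ht ht) ht)]
  have hEq : 2 * (1/b + 1/(2*b^2) + 1/(3*b^3) - 1/(a*b^3)) + 2*(2*x+3) * (b⁻¹ - a⁻¹)
        + (x^2+3*x+2) * (1/a^2 - 1/b^2)
      = (6*a^2*b^2 + 3*a^2*b + 2*a^2 - 6*a - 6*(2*x+3)*a*b^2 + 3*(x^2+3*x+2)*(2*a+1)*b) / (3*a^2*b^3) := by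
    field_simp
    ring
  have hpos : 0 ≤ (6*a^2*b^2 + 3*a^2*b + 2*a^2 - 6*a - 6*(2*x+3)*a*b^2 + 3*(x^2+3*x+2)*(2*a+1)*b) / (3*a^2*b^3) :=
    div_nonneg hG (by positivity)
  rw [← hEq] at hpos
  linarith

lemma htilde_aux_d1 (ν : ℝ) (hν : 2 ≤ ν) (y : ℝ) (hy : (-1:ℝ) < y) :
    HasDerivAt (fun y : ℝ => (y^2+3*y+2) * (Real.log (y+1+ν) - Real.log (y+ν)))
      (htilde_d1 ν y) y := by
  have ha : y + ν ≠ 0 := by intro h; linarith [h]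
  have hb : y + 1 + ν ≠ 0 := by intro h; linarith [h]
  have hp : HasDerivAt (fun y : ℝ => y^2+3*y+2) (2*y+3) y := by
    have h := ((hasDerivAt_pow 2 y).add ((hasDerivAt_id y).const_mul (3:ℝ))).add_const (2:ℝ)
    refine h.congr_deriv ?_
    simp
  have hlb : HasDerivAt (fun y : ℝ => Real.log (y+1+ν)) (y+1+ν)⁻¹ y := by
    have h := (((hasDerivAt_id y).add_const (1:ℝ)).add_const ν).log hb
    simpa [one_div] using h
  have hla : HasDerivAt (fun y : ℝ => Real.log (y+ν)) (y+ν)⁻¹ y := by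
    have h := ((hasDerivAt_id y).add_const ν).log ha
    simpa [one_div] using h
  exact hp.mul (hlb.sub hla)

lemma htilde_aux_d2 (ν : ℝ) (hν : 2 ≤ ν) (y : ℝ) (hy : (-1:ℝ) < y) :
    HasDerivAt (htilde_d1 ν) (htilde_d2 ν y) y := by
  have ha : y + ν ≠ 0 := by intro h; linarith [h]
  have hb : y + 1 + ν ≠ 0 := by intro h; linarith [h]
  have hp : HasDerivAt (fun y : ℝ => y^2+3*y+2) (2*y+3) y := by
    have h := ((hasDerivAt_pow 2 y).add ((hasDerivAt_id y).const_mul (3:ℝ))).add_const (2:ℝ)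
    refine h.congr_deriv ?_
    simp
  have hq : HasDerivAt (fun y : ℝ => 2*y+3) (2:ℝ) y := by
    have h := ((hasDerivAt_id y).const_mul (2:ℝ)).add_const (3:ℝ)
    simpa using h
  have hlb : HasDerivAt (fun y : ℝ => Real.log (y+1+ν)) (y+1+ν)⁻¹ y := by
    have h := (((hasDerivAt_id y).add_const (1:ℝ)).add_const ν).log hb
    simpa [one_div] using h
  have hla : HasDerivAt (fun y : ℝ => Real.log (y+ν)) (y+ν)⁻¹ y := by
    have h := ((hasDerivAt_id y).add_const ν).log ha
    simpa [one_div] using h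
  have hib : HasDerivAt (fun y : ℝ => (y+1+ν)⁻¹) (-(1/(y+1+ν)^2)) y := by
    have h := (((hasDerivAt_id y).add_const (1:ℝ)).add_const ν).inv hb
    refine h.congr_deriv ?_
    simp [neg_div]
  have hia : HasDerivAt (fun y : ℝ => (y+ν)⁻¹) (-(1/(y+ν)^2)) y := by
    have h := ((hasDerivAt_id y).add_const ν).inv ha
    refine h.congr_deriv ?_
    simp [neg_div]
  have h := (hq.mul (hlb.sub hla)).add (hp.mul (hib.sub hia))
  refine h.congr_deriv ?_
  simp only [htilde_d2, Pi.sub_apply]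
  ring

theorem htilde_convex (ν : ℝ) (hν : 2 ≤ ν) :
    (∀ x : ℝ, 0 ≤ x →
      0 ≤ iteratedDeriv 2
            (fun x : ℝ => (x ^ 2 + 3 * x + 2) * Real.log ((x + 1 + ν) / (x + ν))) x) ∧
    ConvexOn ℝ (Set.Ici (0 : ℝ))
      (fun x : ℝ => (x ^ 2 + 3 * x + 2) * Real.log ((x + 1 + ν) / (x + ν))) := by
  set f : ℝ → ℝ := fun x : ℝ => (x ^ 2 + 3 * x + 2) * Real.log ((x + 1 + ν) / (x + ν)) with hf
  have hfeq : ∀ y ∈ Ioi (-1:ℝ), f y = (fun y : ℝ => (y^2+3*y+2) * (Real.log (y+1+ν) - Real.log (y+ν))) y := by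
    intro y hy
    simp only [mem_Ioi] at hy
    have ha : (0:ℝ) < y + ν := by linarith
    have hb : (0:ℝ) < y + 1 + ν := by linarith
    simp only [hf, Real.log_div hb.ne' ha.ne']
  have hfe : ∀ x ∈ Ioi (-1:ℝ), f =ᶠ[𝓝 x]
      (fun y : ℝ => (y^2+3*y+2) * (Real.log (y+1+ν) - Real.log (y+ν))) := fun x hx =>
    Filter.eventuallyEq_of_mem (isOpen_Ioi.mem_nhds hx) hfeq
  have hd1 : ∀ x ∈ Ioi (-1:ℝ), HasDerivAt f (htilde_d1 ν x) x := fun x hx =>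
    (htilde_aux_d1 ν hν x hx).congr_of_eventuallyEq (hfe x hx)
  have hderiv1 : ∀ x ∈ Ioi (-1:ℝ), deriv f x = htilde_d1 ν x := fun x hx => (hd1 x hx).deriv
  have hdfe : ∀ x ∈ Ioi (-1:ℝ), deriv f =ᶠ[𝓝 x] htilde_d1 ν := fun x hx =>
    Filter.eventuallyEq_of_mem (isOpen_Ioi.mem_nhds hx) hderiv1
  have hd2 : ∀ x ∈ Ioi (-1:ℝ), HasDerivAt (deriv f) (htilde_d2 ν x) x := fun x hx =>
    (htilde_aux_d2 ν hν x hx).congr_of_eventuallyEq (hdfe x hx)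
  have hiter : ∀ x ∈ Ioi (-1:ℝ), iteratedDeriv 2 f x = htilde_d2 ν x := by
    intro x hx
    rw [iteratedDeriv_succ, iteratedDeriv_one]
    exact (hd2 x hx).deriv
  have hpart1 : ∀ x : ℝ, 0 ≤ x → 0 ≤ iteratedDeriv 2 f x := by
    intro x hx
    rw [hiter x (by simp only [mem_Ioi]; linarith)]
    exact htilde_key_ineq ν x hν hx
  refine ⟨hpart1, ?_⟩
  apply convexOn_of_deriv2_nonneg (convex_Ici 0)
  · have hc : ContinuousOn (fun x : ℝ => (x + 1 + ν) / (x + ν)) (Ici 0) := by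
      apply ContinuousOn.div (by fun_prop) (by fun_prop)
      intro x hx
      simp only [mem_Ici] at hx
      intro h; linarith [h]
    exact (by fun_prop : Continuous (fun x : ℝ => x^2+3*x+2)).continuousOn.mul
      (hc.log (fun x hx => by
        simp only [mem_Ici] at hx
        have ha : (0:ℝ) < x + ν := by linarith
        have hb : (0:ℝ) < x + 1 + ν := by linarith
        exact (div_pos hb ha).ne'))
  · rw [interior_Ici]
    intro x hx
    simp only [mem_Ioi] at hx
    exact (hd1 x (by simp only [mem_Ioi]; linarith)).differentiableAt.differentiableWithinAt
  · rw [interior_Ici]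
    intro x hx
    simp only [mem_Ioi] at hx
    exact (hd2 x (by simp only [mem_Ioi]; linarith)).differentiableAt.differentiableWithinAt
  · rw [interior_Ici]
    intro x hx
    simp only [mem_Ioi] at hx
    rw [show (deriv^[2] f) = iteratedDeriv 2 f from (iteratedDeriv_eq_iterate).symm]
    exact hpart1 x (le_of_lt hx)
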